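/- There exists a unique Witt vector c ∈ 𝕎(R) such that for every n ≥ 0 the n-th ghost component of c equals ε·q^{p^n−1}·[p^n]_{q^{p^α}}. (This is the ghost-component description of the element c of Proposition 3.4, which satisfies g̃(q) − f̃(q) = f̃([p]_{q^{p^α}})·c for the δ-ring lifts g̃, f̃ of ψ and the inclusion A → R.) -/

import Mathlib

open Finset

/-- The q-analogue `[n]_t = ∑_{i=0}^{n-1} t^i`. -/
def qan {A : Type*} [CommRing A] (t : A) (n : ℕ) : A := ∑ i ∈ Finset.range n, t ^ i

/-- `A := W(k)⟦q−1⟧`, the power series ring over the `p`-typical Witt vectors of `k`;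
`q` denotes `1` plus the power series variable. -/
noncomputable def qq (p : ℕ) [Fact p.Prime] (k : Type*) [CommRing k] :
    PowerSeries (WittVector p k) :=
  1 + PowerSeries.X

/-- The distinguished element `d := [p]_{q^{p^α}}` of `A`. -/
noncomputable def dd (p α : ℕ) [Fact p.Prime] (k : Type*) [CommRing k] :
    PowerSeries (WittVector p k) :=
  qan ((qq p k) ^ p ^ α) p

/-- The polynomial `ε² − q·(q^{p^α}−1)·ε` over `A`, whose adjunction defines `R`. -/
noncomputable def relPoly (p α : ℕ) [Fact p.Prime] (k : Type*) [CommRing k] :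
    Polynomial (PowerSeries (WittVector p k)) :=
  Polynomial.X ^ 2 - Polynomial.C (qq p k * ((qq p k) ^ p ^ α - 1)) * Polynomial.X

/-- `R := A[ε]/(ε² − q·(q^{p^α}−1)·ε)`, a free `A`-module with basis `1, ε`. -/
noncomputable abbrev Rring (p α : ℕ) [Fact p.Prime] (k : Type*) [CommRing k] :=
  AdjoinRoot (relPoly p α k)

/-- `ε ∈ R`. -/
noncomputable def eps (p α : ℕ) [Fact p.Prime] (k : Type*) [CommRing k] : Rring p α k :=
  AdjoinRoot.root (relPoly p α k)

namespace Stmt5Aux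

/-- Naturality of ghost components in the base ring. -/
lemma ghost_nat (p : ℕ) [Fact p.Prime] {R S : Type*} [CommRing R] [CommRing S] (f : R →+* S)
    (x : WittVector p R) (n : ℕ) :
    WittVector.ghostComponent n (WittVector.map f x) = f (WittVector.ghostComponent n x) := by
  simp only [WittVector.ghostComponent_apply]
  rw [MvPolynomial.aeval_def, MvPolynomial.aeval_def,
    MvPolynomial.eval₂_comp_left f (algebraMap ℤ R) x.coeff]
  congr 1
  ext m; simp

section

variable (p α : ℕ) [Fact p.Prime] (k : Type*) [Field k] [CharP k p]

local notation "E" => algebraMap (PowerSeries (WittVector p k)) (Rring p α k)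

omit [Field k] [CharP k p] in
lemma eps_sq [CommRing k] :
    eps p α k ^ 2 = E (qq p k * ((qq p k) ^ p ^ α - 1)) * eps p α k := by
  have h := AdjoinRoot.eval₂_root (relPoly p α k)
  rw [relPoly] at h
  simp only [Polynomial.eval₂_sub, Polynomial.eval₂_mul, Polynomial.eval₂_pow,
    Polynomial.eval₂_X, Polynomial.eval₂_C, sub_eq_zero] at h
  rw [← AdjoinRoot.algebraMap_eq] at h
  exact h

set_option maxHeartbeats 1000000 in
omit [Field k] [CharP k p] in
lemma pow_formula [CommRing k] (m : ℕ) :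
    (E (qq p k) + eps p α k) ^ m =
      E ((qq p k) ^ m) +
        eps p α k * E (∑ i ∈ range m,
          (qq p k * (qq p k) ^ p ^ α) ^ (m - 1 - i) * (qq p k) ^ i) := by
  induction m with
  | zero => simp
  | succ m ih =>
    rw [pow_succ, ih]
    have hsum : ∑ i ∈ range (m + 1), (qq p k * (qq p k) ^ p ^ α) ^ (m + 1 - 1 - i) * (qq p k) ^ i
        = (qq p k) ^ m + (qq p k * (qq p k) ^ p ^ α) *
          ∑ i ∈ range m, (qq p k * (qq p k) ^ p ^ α) ^ (m - 1 - i) * (qq p k) ^ i := by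
      rw [Finset.sum_range_succ, Finset.mul_sum]
      simp only [Nat.add_sub_cancel, Nat.sub_self, pow_zero, one_mul]
      rw [add_comm]
      congr 1
      apply Finset.sum_congr rfl
      intro i hi
      rw [Finset.mem_range] at hi
      have h1 : m - i = (m - 1 - i) + 1 := by omega
      rw [h1, pow_succ', mul_assoc]
    rw [show (qq p k) ^ (m+1) = (qq p k) ^ m * qq p k from pow_succ _ _, hsum]
    have he : (eps p α k) ^ 2
        = E (qq p k) * ((E (qq p k)) ^ p ^ α - 1) * eps p α k := by
      rw [eps_sq]; push_cast [map_mul, map_sub, map_pow, map_one]; ring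
    set ES := E (∑ i ∈ range m, (qq p k * (qq p k) ^ p ^ α) ^ (m - 1 - i) * (qq p k) ^ i) with hES
    simp only [map_add, map_mul, map_pow]
    linear_combination ES * he

omit [Field k] [CharP k p] in
lemma sum_eq [CommRing k] (m : ℕ) :
    ∑ i ∈ range m, (qq p k * (qq p k) ^ p ^ α) ^ (m - 1 - i) * (qq p k) ^ i
      = (qq p k) ^ (m - 1) * qan ((qq p k) ^ p ^ α) m := by
  rw [qan, Finset.mul_sum, ← Finset.sum_range_reflect]
  apply Finset.sum_congr rfl
  intro i hi
  rw [Finset.mem_range] at hi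
  rw [mul_pow, mul_right_comm, ← pow_add,
    show m - 1 - (m - 1 - i) = i from by omega,
    show i + (m - 1 - i) = m - 1 from by omega]

omit [CharP k p] in
lemma cc_pow (m : ℕ) :
    PowerSeries.constantCoeff (R := WittVector p k)
      ((1 + PowerSeries.X : PowerSeries (WittVector p k)) ^ m) = 1 := by
  rw [map_pow]; simp

omit [CharP k p] in
lemma coeff_one_pow (m : ℕ) :
    PowerSeries.coeff (R := WittVector p k) 1 ((1 + PowerSeries.X : PowerSeries (WittVector p k)) ^ m)
      = (m : WittVector p k) := by
  induction m with
  | zero => simp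
  | succ m ih =>
    rw [pow_succ, PowerSeries.coeff_one_mul, ih, cc_pow]
    simp

lemma c0_ne_zero : qq p k * ((qq p k) ^ p ^ α - 1) ≠ 0 := by
  have hq : qq p k ≠ 0 := by
    intro h
    have := congrArg (PowerSeries.constantCoeff (R := WittVector p k)) h
    simp [qq] at this
  have hq2 : (qq p k) ^ p ^ α - 1 ≠ 0 := by
    intro h
    have := congrArg (PowerSeries.coeff (R := WittVector p k) 1) h
    rw [map_sub, qq, coeff_one_pow] at this
    simp only [map_zero, PowerSeries.coeff_one, one_ne_zero, if_false, sub_zero] at this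
    have hp : ((p : WittVector p k)) ^ α ≠ 0 :=
      pow_ne_zero _ (WittVector.p_nonzero p k)
    rw [Nat.cast_pow] at this
    exact hp this
  exact mul_ne_zero hq hq2

omit [Field k] [CharP k p] in
lemma pr1_aux [CommRing k] :
    (relPoly p α k).eval₂
      (algebraMap (PowerSeries (WittVector p k)) (FractionRing (PowerSeries (WittVector p k))))
      0 = 0 := by
  simp [relPoly]

omit [Field k] [CharP k p] in
lemma pr2_aux [CommRing k] :
    (relPoly p α k).eval₂
      (algebraMap (PowerSeries (WittVector p k)) (FractionRing (PowerSeries (WittVector p k))))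
      (algebraMap _ _ (qq p k * ((qq p k) ^ p ^ α - 1))) = 0 := by
  simp only [relPoly, Polynomial.eval₂_sub, Polynomial.eval₂_mul, Polynomial.eval₂_pow,
    Polynomial.eval₂_X, Polynomial.eval₂_C]
  ring

/-- First projection `R → Frac(A)`, sending `ε` to `0`. -/
noncomputable def pr1 :
    Rring p α k →+* FractionRing (PowerSeries (WittVector p k)) :=
  AdjoinRoot.lift (algebraMap _ _) 0 (pr1_aux p α k)

/-- Second projection `R → Frac(A)`, sending `ε` to `q(q^{p^α}−1)`. -/
noncomputable def pr2 :
    Rring p α k →+* FractionRing (PowerSeries (WittVector p k)) :=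
  AdjoinRoot.lift (algebraMap _ _) (algebraMap _ _ (qq p k * ((qq p k) ^ p ^ α - 1)))
    (pr2_aux p α k)

lemma joint_inj (z : Rring p α k)
    (h1 : pr1 p α k z = 0) (h2 : pr2 p α k z = 0) : z = 0 := by
  obtain ⟨g, rfl⟩ := AdjoinRoot.mk_surjective z
  rw [pr1, AdjoinRoot.lift_mk] at h1
  rw [pr2, AdjoinRoot.lift_mk] at h2
  rw [Polynomial.eval₂_at_zero] at h1
  rw [Polynomial.eval₂_hom] at h2
  have hinj : Function.Injective
      (algebraMap (PowerSeries (WittVector p k)) (FractionRing (PowerSeries (WittVector p k)))) :=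
    IsFractionRing.injective _ _
  have e1 : g.coeff 0 = 0 := by apply hinj; rw [h1, map_zero]
  have e2 : g.eval (qq p k * ((qq p k) ^ p ^ α - 1)) = 0 := by apply hinj; rw [h2, map_zero]
  rw [AdjoinRoot.mk_eq_zero]
  obtain ⟨h, rfl⟩ := (Polynomial.X_dvd_iff).2 e1
  set c := qq p k * ((qq p k) ^ p ^ α - 1)
  rw [Polynomial.eval_mul, Polynomial.eval_X] at e2
  have hc := c0_ne_zero p α k
  have e3 : h.eval c = 0 := by
    rcases mul_eq_zero.1 e2 with h' | h'
    · exact absurd h' hc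
    · exact h'
  obtain ⟨h', rfl⟩ := (Polynomial.dvd_iff_isRoot.2 e3)
  refine Dvd.intro h' ?_
  rw [relPoly]
  ring

lemma p_ne_zero_frac :
    (p : FractionRing (PowerSeries (WittVector p k))) ≠ 0 := by
  have hA : (p : PowerSeries (WittVector p k)) ≠ 0 := by
    intro h
    apply WittVector.p_nonzero p k
    have := congrArg (PowerSeries.constantCoeff (R := WittVector p k)) h
    simpa using this
  intro h
  apply hA
  apply IsFractionRing.injective (PowerSeries (WittVector p k))
    (FractionRing (PowerSeries (WittVector p k)))
  rw [map_natCast, map_zero]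
  exact h

/-- Ghost components are jointly injective on `𝕎(R)`. -/
lemma ghost_inj (x y : WittVector p (Rring p α k))
    (h : ∀ n, WittVector.ghostComponent n x = WittVector.ghostComponent n y) : x = y := by
  letI : Invertible (p : FractionRing (PowerSeries (WittVector p k))) :=
    invertibleOfNonzero (p_ne_zero_frac p k)
  have key : ∀ f : Rring p α k →+* FractionRing (PowerSeries (WittVector p k)),
      WittVector.map f x = WittVector.map f y := by
    intro f
    apply (WittVector.ghostMap.bijective_of_invertible p
      (FractionRing (PowerSeries (WittVector p k)))).injective
    funext n
    simp only [WittVector.ghostMap_apply, ghost_nat, h n]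
  ext n
  have h1 := congrArg (fun w => WittVector.coeff w n) (key (pr1 p α k))
  have h2 := congrArg (fun w => WittVector.coeff w n) (key (pr2 p α k))
  simp only [WittVector.map_coeff] at h1 h2
  have := joint_inj p α k (x.coeff n - y.coeff n)
    (by rw [map_sub, h1, sub_self]) (by rw [map_sub, h2, sub_self])
  exact sub_eq_zero.1 this

end

end Stmt5Aux

/-- There exists a unique Witt vector `c ∈ 𝕎(R)` whose `n`-th ghost
component is `ε·q^{p^n−1}·[p^n]_{q^{p^α}}` for every `n ≥ 0`. -/
theorem stmt5 (p : ℕ) [Fact p.Prime] (α : ℕ)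
    (k : Type*) [Field k] [CharP k p] [PerfectRing k p] :
    ∃! c : WittVector p (Rring p α k), ∀ n : ℕ,
      WittVector.ghostComponent n c =
        eps p α k *
          algebraMap _ _ ((qq p k) ^ (p ^ n - 1) * qan ((qq p k) ^ p ^ α) (p ^ n)) := by
  classical
  set E := algebraMap (PowerSeries (WittVector p k)) (Rring p α k)
  refine ⟨WittVector.teichmuller p (E (qq p k) + eps p α k)
      - WittVector.teichmuller p (E (qq p k)), ?_, ?_⟩
  · intro n
    rw [map_sub, WittVector.ghostComponent_teichmuller, WittVector.ghostComponent_teichmuller,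
      Stmt5Aux.pow_formula, Stmt5Aux.sum_eq, ← map_pow]
    ring
  · intro y hy
    apply Stmt5Aux.ghost_inj
    intro n
    rw [hy n, map_sub, WittVector.ghostComponent_teichmuller, WittVector.ghostComponent_teichmuller,
      Stmt5Aux.pow_formula, Stmt5Aux.sum_eq, ← map_pow]
    ring
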